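/- arXiv:2002.09622 — 4 statements merged into one kernel-verified Lean document; each statement's English description precedes it below -/
import Mathlib

section
/- Let M = (S,N,V) be a neighborhood model and for each w let Γ_w ⊆ {X ⊆ S | w ∉ X}. Define N⁺(w) = N(w) ∪ Γ_w and N⁻(w) = N(w) \ Γ_w. Then for every w ∈ S and every L(•)-formula α: M,w ⊨ α iff (S,N⁺,V),w ⊨ α, and M,w ⊨ α iff (S,N⁻,V),w ⊨ α. -/
structure NModel (S : Type) where
  N : S → Set (Set S)
  V : ℕ → Set S

/-- The language L(•). -/
inductive Form : Type where
  | atom : ℕ → Form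
  | neg : Form → Form
  | and : Form → Form → Form
  | dot : Form → Form

def sat {S : Type} (M : NModel S) : S → Form → Prop
  | s, .atom p => s ∈ M.V p
  | s, .neg φ => ¬ sat M s φ
  | s, .and φ ψ => sat M s φ ∧ sat M s ψ
  | s, .dot φ => sat M s φ ∧ {x | sat M x φ} ∉ M.N s

/-- Adding or removing neighborhoods not containing the evaluation point does not affect
truth of L(•)-formulas. -/
theorem dot_invariance_add_remove {S : Type} (N : S → Set (Set S)) (V : ℕ → Set S)
    (Γ : S → Set (Set S)) (hΓ : ∀ w, ∀ X ∈ Γ w, w ∉ X) :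
    ∀ (w : S) (α : Form),
      (sat ⟨N, V⟩ w α ↔ sat ⟨fun x => N x ∪ Γ x, V⟩ w α) ∧
      (sat ⟨N, V⟩ w α ↔ sat ⟨fun x => N x \ Γ x, V⟩ w α) := by
  intro w α
  induction α generalizing w with
  | atom p => exact ⟨Iff.rfl, Iff.rfl⟩
  | neg φ ih => exact ⟨not_congr (ih w).1, not_congr (ih w).2⟩
  | and φ ψ ihφ ihψ =>
      exact ⟨and_congr (ihφ w).1 (ihψ w).1, and_congr (ihφ w).2 (ihψ w).2⟩
  | dot φ ih =>
      have hset1 : {x | sat ⟨fun x => N x ∪ Γ x, V⟩ x φ} = {x | sat ⟨N, V⟩ x φ} := by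
        ext x; exact (ih x).1.symm
      have hset2 : {x | sat ⟨fun x => N x \ Γ x, V⟩ x φ} = {x | sat ⟨N, V⟩ x φ} := by
        ext x; exact (ih x).2.symm
      constructor
      · show sat ⟨N, V⟩ w φ ∧ _ ∉ N w ↔ sat _ w φ ∧ _ ∉ N w ∪ Γ w
        rw [hset1, ← (ih w).1]
        constructor
        · rintro ⟨h1, h2⟩
          refine ⟨h1, ?_⟩
          rintro (h | h)
          · exact h2 h
          · exact hΓ w _ h h1
        · rintro ⟨h1, h2⟩
          exact ⟨h1, fun h => h2 (Or.inl h)⟩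
      · show sat ⟨N, V⟩ w φ ∧ _ ∉ N w ↔ sat _ w φ ∧ _ ∉ N w \ Γ w
        rw [hset2, ← (ih w).2]
        constructor
        · rintro ⟨h1, h2⟩
          exact ⟨h1, fun h => h2 h.1⟩
        · rintro ⟨h1, h2⟩
          refine ⟨h1, fun h => h2 ⟨h, fun hg => hΓ w _ hg h1⟩⟩
end

section
/- The frame property of monotonicity (m) is not definable in L(•): there exist frames F and F' such that F is monotone, F' is not, and for all L(•)-formulas φ, F ⊨ φ iff F' ⊨ φ. -/
/-- Frame validity: `φ` holds at every state of every model based on the frame. -/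
def frameValid {S : Type} (N : S → Set (Set S)) (φ : Form) : Prop :=
  ∀ (V : ℕ → Set S) (s : S), sat ⟨N, V⟩ s φ

def monotoneFrame {S : Type} (N : S → Set (Set S)) : Prop :=
  ∀ s (X Y : Set S), X ∈ N s → X ⊆ Y → Y ∈ N s

private lemma sat_iff (V : ℕ → Set Unit) (φ : Form) (s : Unit) :
    sat ⟨fun _ => (∅ : Set (Set Unit)), V⟩ s φ ↔
    sat ⟨fun _ => ({∅} : Set (Set Unit)), V⟩ s φ := by
  induction φ with
  | atom p => rfl
  | neg φ ih => simp [sat, ih]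
  | and φ ψ ih1 ih2 => simp [sat, ih1, ih2]
  | dot φ ih =>
    simp only [sat, ih]
    constructor
    · rintro ⟨h, -⟩
      refine ⟨h, ?_⟩
      simp only [Set.mem_singleton_iff]
      intro hset
      have : s ∈ {x | sat ⟨fun _ => ({∅} : Set (Set Unit)), V⟩ x φ} := h
      rw [hset] at this
      exact this
    · rintro ⟨h, -⟩
      exact ⟨h, fun hc => hc⟩


/-- Monotonicity (m) is not definable in L(•): there are frames F (monotone) and F'
(not monotone) validating exactly the same L(•)-formulas. -/
theorem m_undefinable_in_dot :
    ∃ (S S' : Type) (_ : Nonempty S) (_ : Nonempty S')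
      (N : S → Set (Set S)) (N' : S' → Set (Set S')),
      monotoneFrame N ∧ ¬ monotoneFrame N' ∧
      (∀ φ : Form, frameValid N φ ↔ frameValid N' φ) := by
  refine ⟨Unit, Unit, ⟨()⟩, ⟨()⟩, fun _ => ∅, fun _ => {∅}, ?_, ?_, ?_⟩
  · intro s X Y hX _; exact hX.elim
  · intro h
    have := h () ∅ Set.univ rfl (Set.empty_subset _)
    simp only [Set.mem_singleton_iff] at this
    exact absurd this.symm (Set.empty_ne_univ)
  · intro φ
    constructor
    · intro h V s; exact (sat_iff V φ s).mp (h V s)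
    · intro h V s; exact (sat_iff V φ s).mpr (h V s)
end

section
/- For the transitive closure construction on neighborhood frames: for all w ∈ S, if X ∈ N^tc(w) but X ∉ N(w), then w ∈ X. -/
/-- `m_{N}(X) = {z | X ∈ N(z)}`. -/
def mN {S : Type} (N : S → Set (Set S)) (X : Set S) : Set S := {z | X ∈ N z}

/-- The iterated neighborhood functions `N_i`. -/
def Niter {S : Type} (N : S → Set (Set S)) : ℕ → S → Set (Set S)
  | 0 => N
  | i + 1 => fun w => Niter N i w ∪ (fun X => mN (Niter N i) X) '' Niter N i w

/-- The transitive closure `N^tc = ⋃_i N_i`. -/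
def Ntc {S : Type} (N : S → Set (Set S)) (w : S) : Set (Set S) := ⋃ i, Niter N i w

lemma Niter_aux {S : Type} (N : S → Set (Set S)) (i : ℕ) :
    ∀ (w : S) (X : Set S), X ∈ Niter N i w → X ∈ N w ∨ w ∈ X := by
  induction i with
  | zero => intro w X h; exact Or.inl h
  | succ i ih =>
    intro w X h
    rcases h with h | ⟨Y, hY, rfl⟩
    · exact ih w X h
    · exact Or.inr hY

/-- Every neighborhood in `N^tc(w)` not already in `N(w)` contains `w`. -/
theorem mem_of_mem_Ntc_not_mem {S : Type} (N : S → Set (Set S)) :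
    ∀ (w : S) (X : Set S), X ∈ Ntc N w → X ∉ N w → w ∈ X := by
  intro w X hX hN
  obtain ⟨_, ⟨i, rfl⟩, hi⟩ := hX
  exact (Niter_aux N i w X hi).resolve_left hN
end

section
/- On any monotone neighborhood model, the formula •φ → ••φ is valid: every unknown truth is itself an unknown truth. -/
def monotone' {S : Type} (M : NModel S) : Prop :=
  ∀ s (X Y : Set S), X ∈ M.N s → X ⊆ Y → Y ∈ M.N s

/-- `•φ → ••φ` is valid on every monotone neighborhood model. -/
theorem dot_implies_dotdot {S : Type} (M : NModel S) (hm : monotone' M) :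
    ∀ (s : S) (φ : Form), sat M s (.dot φ) → sat M s (.dot (.dot φ)) := by
  intro s φ h
  refine ⟨h, fun hin => h.2 ?_⟩
  exact hm s _ _ hin (fun x hx => hx.1)
end
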